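/- For every x in [0,1] and every natural number i > 0, ∫_{(2-x)/3^i}^{2/3^i} f(t) dt = (2^(i-1) / 9^i) · (x + ∫_0^x f(t) dt). -/
import Mathlib


open intervalIntegral Set

theorem bourbaki_stmt (f : ℝ → ℝ)
    (hcont : ContinuousOn f (Set.Icc 0 1))
    (h0 : f 0 = 0) (h1 : f 1 = 1)
    (hw1 : ∀ x ∈ Set.Icc (0:ℝ) 1, f (x / 3) = (2/3) * f x)
    (hw2 : ∀ x ∈ Set.Icc (0:ℝ) 1, f ((2 - x) / 3) = (1/3) * (1 + f x))
    (hw3 : ∀ x ∈ Set.Icc (0:ℝ) 1, f ((2 + x) / 3) = 1/3 + (2/3) * f x) :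
    ∀ x ∈ Set.Icc (0:ℝ) 1, ∀ i : ℕ, 0 < i → ∫ t in ((2 - x) / 3 ^ i)..(2 / 3 ^ i), f t = (2 ^ (i - 1) / 9 ^ i) * (x + ∫ t in (0:ℝ)..x, f t) := by
  intro x hx
  obtain ⟨hx0, hx1⟩ := hx
  have hfint : IntervalIntegrable f MeasureTheory.volume 0 x := by
    apply ContinuousOn.intervalIntegrable
    apply hcont.mono
    rw [Set.uIcc_of_le hx0]
    exact Set.Icc_subset_Icc le_rfl hx1
  intro i hi
  induction i with
  | zero => omega
  | succ n ih =>
    rcases Nat.eq_zero_or_pos n with hn | hn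
    · subst hn
      -- base case i = 1
      have key : (∫ s in (0:ℝ)..x, f ((2 - s)/3)) = (3:ℝ) * ∫ t in ((2-x)/3)..(2/3), f t := by
        rw [intervalIntegral.integral_comp_sub_left (fun u => f (u/3)) 2,
            intervalIntegral.integral_comp_div _ (by norm_num : (3:ℝ) ≠ 0), smul_eq_mul]
        norm_num
      have congr1 : (∫ s in (0:ℝ)..x, f ((2 - s)/3)) = ∫ s in (0:ℝ)..x, (1/3) * (1 + f s) := by
        apply intervalIntegral.integral_congr
        intro s hs
        rw [Set.uIcc_of_le hx0] at hs
        exact hw2 s ⟨hs.1, hs.2.trans hx1⟩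
      have hval : (∫ s in (0:ℝ)..x, (1/3) * (1 + f s)) = (1/3) * (x + ∫ t in (0:ℝ)..x, f t) := by
        rw [intervalIntegral.integral_const_mul,
            intervalIntegral.integral_add intervalIntegrable_const hfint]
        simp
      rw [congr1, hval] at key
      have : (∫ t in ((2-x)/3)..(2/3), f t) = (1/9) * (x + ∫ t in (0:ℝ)..x, f t) := by
        linarith
      simpa using this
    · have IH := ih hn
      obtain ⟨k, rfl⟩ : ∃ k, n = k + 1 := ⟨n - 1, by omega⟩
      set A : ℝ := (2 - x) / 3 ^ (k+1) with hA
      set B : ℝ := 2 / 3 ^ (k+1) with hB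
      have h3 : (0:ℝ) < 3 ^ (k+1) := by positivity
      have hAB : A ≤ B := by
        rw [hA, hB]; gcongr; linarith
      have hA0 : 0 ≤ A := div_nonneg (by linarith) h3.le
      have hB1 : B ≤ 1 := by
        rw [hB, div_le_one h3]
        calc (2:ℝ) ≤ 3 := by norm_num
        _ ≤ 3 ^ (k+1) := le_self_pow₀ (by norm_num) (by omega)
      have bnd1 : (2 - x) / 3 ^ (k+1+1) = A / 3 := by
        rw [hA]; ring
      have bnd2 : (2:ℝ) / 3 ^ (k+1+1) = B / 3 := by
        rw [hB]; ring
      rw [bnd1, bnd2]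
      have key : (∫ u in A..B, f (u/3)) = (3:ℝ) * ∫ t in (A/3)..(B/3), f t := by
        rw [intervalIntegral.integral_comp_div _ (by norm_num : (3:ℝ) ≠ 0), smul_eq_mul]
      have congr1 : (∫ u in A..B, f (u/3)) = ∫ u in A..B, (2/3) * f u := by
        apply intervalIntegral.integral_congr
        intro u hu
        rw [Set.uIcc_of_le hAB] at hu
        exact hw1 u ⟨hA0.trans hu.1, hu.2.trans hB1⟩
      rw [congr1, intervalIntegral.integral_const_mul, IH] at key
      have goal' : (∫ t in (A/3)..(B/3), f t)
          = (2/3) * (2 ^ (k+1-1) / 9 ^ (k+1)) * (x + ∫ t in (0:ℝ)..x, f t) / 3 := by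
        linarith
      rw [goal']
      have e1 : (k+1-1) = k := rfl
      have e2 : (k+1+1-1) = k+1 := rfl
      rw [e1, e2]
      field_simp
      ring
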